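/- Consider the treated-neighbor-count estimand: exposure mapping T_i = (D_i, Σ_j A_{ij} D_j), subpopulation ℳ_n of units with exactly γ neighbors, and exposure values t = (d, τ), t' = (d, τ') with γ ≥ τ > τ' > 0. Suppose D_1,…,D_n are i.i.d. Bernoulli(p) conditional on 𝒞_i for every i, with p ∈ (0,1), and unconfoundedness holds (Y_i(·) ⊥ D | 𝒞_i). Then τ(t,t') satisfies ordered K-neighborhood sign preservation: if for every i ∈ ℳ_n every contrast Y_i(d̃) − Y_i(d̃') with d̃ ≥ d̃' componentwise, d̃ and d̃' agreeing outside N(i,1), d̃_i = d̃'_i = d, Σ_j A_{ij} d̃_j = τ, and Σ_j A_{ij} d̃'_j = τ' is nonnegative, then τ(t,t') ≥ 0 (and symmetrically for nonpositive). -/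

import Mathlib

open Finset
open scoped Classical

noncomputable section

/-- Probability of event `A` under mass function `p` on a finite space. -/
def prb {Ω : Type*} [Fintype Ω] (p : Ω → ℝ) (A : Ω → Prop) : ℝ :=
  ∑ ω, if A ω then p ω else 0

/-- Unnormalized expectation of `f` on the event `A`. -/
def eiv {Ω : Type*} [Fintype Ω] (p : Ω → ℝ) (f : Ω → ℝ) (A : Ω → Prop) : ℝ :=
  ∑ ω, if A ω then p ω * f ω else 0

/-- Expectation of `f`. -/
def expv {Ω : Type*} [Fintype Ω] (p : Ω → ℝ) (f : Ω → ℝ) : ℝ := ∑ ω, p ω * f ω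

/-- Conditional expectation of `f` given the event `A`. -/
def cexp {Ω : Type*} [Fintype Ω] (p : Ω → ℝ) (f : Ω → ℝ) (A : Ω → Prop) : ℝ :=
  eiv p f A / prb p A

/-- Conditional probability of `A` given `B`. -/
def cpr {Ω : Type*} [Fintype Ω] (p : Ω → ℝ) (A B : Ω → Prop) : ℝ :=
  prb p (fun ω => A ω ∧ B ω) / prb p B

/-- Real value of a boolean treatment. -/
def bR : Bool → ℝ := fun x => if x then 1 else 0

/-- Number of treated neighbors of `i` in the network `A` under assignment `d`. -/
def nbc {n : ℕ} (A : Fin n → Fin n → Bool) (i : Fin n) (d : Fin n → Bool) : ℕ :=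
  (Finset.univ.filter (fun j => A i j = true ∧ d j = true)).card

/-- Degree of `i` in the network `A`. -/
def degA {n : ℕ} (A : Fin n → Fin n → Bool) (i : Fin n) : ℕ :=
  (Finset.univ.filter (fun j => A i j = true)).card

section Helpers

variable {Ω : Type*} [Fintype Ω]

lemma eiv_neg (p : Ω → ℝ) (f : Ω → ℝ) (A : Ω → Prop) :
    eiv p (fun ω => -f ω) A = - eiv p f A := by
  rw [eiv, eiv, ← Finset.sum_neg_distrib]
  refine Finset.sum_congr rfl fun ω _ => ?_
  split_ifs <;> ring

lemma cexp_neg (p : Ω → ℝ) (f : Ω → ℝ) (A : Ω → Prop) :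
    cexp p (fun ω => -f ω) A = - cexp p f A := by
  rw [cexp, cexp, eiv_neg, neg_div]

end Helpers

lemma prb_decomp {Ω : Type*} [Fintype Ω] {n : ℕ} (p : Ω → ℝ) (D : Ω → Fin n → Bool)
    (Ci : Ω → Prop) (Q : (Fin n → Bool) → Prop) [DecidablePred Q] :
    prb p (fun ω => Q (D ω) ∧ Ci ω)
      = ∑ d ∈ Finset.univ.filter Q, prb p (fun ω => D ω = d ∧ Ci ω) := by
  unfold prb
  rw [Finset.sum_comm]
  refine Finset.sum_congr rfl fun ω _ => ?_
  by_cases hQ : Q (D ω)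
  · rw [Finset.sum_eq_single (D ω)]
    · simp [hQ]
    · intro d _ hne
      have : ¬ (D ω = d) := fun h => hne h.symm
      simp [this]
    · intro h
      exact absurd (Finset.mem_filter.mpr ⟨Finset.mem_univ _, hQ⟩) h
  · rw [Finset.sum_eq_zero, if_neg (by tauto)]
    intro d hd
    have hdQ := (Finset.mem_filter.mp hd).2
    have : ¬ (D ω = d) := fun h => hQ (h ▸ hdQ)
    simp [this]

lemma eiv_decomp {Ω : Type*} [Fintype Ω] {n : ℕ} (p : Ω → ℝ) (D : Ω → Fin n → Bool)
    (Ci : Ω → Prop) (Q : (Fin n → Bool) → Prop) [DecidablePred Q]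
    (Y : (Fin n → Bool) → Ω → ℝ) :
    eiv p (fun ω => Y (D ω) ω) (fun ω => Q (D ω) ∧ Ci ω)
      = ∑ d ∈ Finset.univ.filter Q, eiv p (fun ω => Y d ω) (fun ω => D ω = d ∧ Ci ω) := by
  unfold eiv
  rw [Finset.sum_comm]
  refine Finset.sum_congr rfl fun ω _ => ?_
  by_cases hQ : Q (D ω)
  · rw [Finset.sum_eq_single (D ω)]
    · simp [hQ]
    · intro d _ hne
      have : ¬ (D ω = d) := fun h => hne h.symm
      simp [this]
    · intro h
      exact absurd (Finset.mem_filter.mpr ⟨Finset.mem_univ _, hQ⟩) h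
  · rw [Finset.sum_eq_zero, if_neg (by tauto)]
    intro d hd
    have hdQ := (Finset.mem_filter.mp hd).2
    have : ¬ (D ω = d) := fun h => hQ (h ▸ hdQ)
    simp [this]
lemma card_supersets {α : Type*} [DecidableEq α] (N S' : Finset α) (hS'N : S' ⊆ N)
    (a : ℕ) (hba : S'.card ≤ a) :
    ((N.powersetCard a).filter (fun S => S' ⊆ S)).card
      = (N.card - S'.card).choose (a - S'.card) := by
  rw [← Finset.card_sdiff_of_subset hS'N, ← Finset.card_powersetCard]
  apply Finset.card_nbij' (fun S => S \ S') (fun U => U ∪ S')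
  · intro S hS
    obtain ⟨hS1, hS2⟩ := Finset.mem_filter.mp hS
    obtain ⟨hSN, hScard⟩ := Finset.mem_powersetCard.mp hS1
    refine Finset.mem_powersetCard.mpr ⟨Finset.sdiff_subset_sdiff hSN le_rfl, ?_⟩
    rw [Finset.card_sdiff_of_subset hS2, hScard]
  · intro U hU
    obtain ⟨hUN, hUcard⟩ := Finset.mem_powersetCard.mp hU
    have hdisj : Disjoint U S' := Finset.disjoint_of_subset_left hUN Finset.sdiff_disjoint
    refine Finset.mem_filter.mpr ⟨Finset.mem_powersetCard.mpr ⟨?_, ?_⟩, Finset.subset_union_right⟩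
    · exact Finset.union_subset (hUN.trans Finset.sdiff_subset) hS'N
    · rw [Finset.card_union_of_disjoint hdisj, hUcard, Nat.sub_add_cancel hba]
  · intro S hS
    exact Finset.sdiff_union_of_subset (Finset.mem_filter.mp hS).2
  · intro U hU
    obtain ⟨hUN, _⟩ := Finset.mem_powersetCard.mp hU
    have hdisj : Disjoint U S' := Finset.disjoint_of_subset_left hUN Finset.sdiff_disjoint
    dsimp only
    rw [Finset.union_sdiff_distrib, Finset.sdiff_self, Finset.union_empty,
      Finset.sdiff_eq_self_of_disjoint hdisj]

lemma comb_avg {α : Type*} [DecidableEq α] (N : Finset α) (a b : ℕ) (hba : b ≤ a)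
    (haN : a ≤ N.card) (f : Finset α → ℝ)
    (hmon : ∀ S ∈ N.powersetCard a, ∀ S' ∈ N.powersetCard b, S' ⊆ S → f S' ≤ f S) :
    (∑ S' ∈ N.powersetCard b, f S') * (N.card.choose a : ℝ)
      ≤ (∑ S ∈ N.powersetCard a, f S) * (N.card.choose b : ℝ) := by
  have key : (∑ S' ∈ N.powersetCard b, f S') * ((N.card - b).choose (a - b) : ℝ)
      ≤ (∑ S ∈ N.powersetCard a, f S) * (a.choose b : ℝ) := by
    have L : (∑ S' ∈ N.powersetCard b, f S') * ((N.card - b).choose (a - b) : ℝ)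
        = ∑ S' ∈ N.powersetCard b, ∑ S ∈ N.powersetCard a, if S' ⊆ S then f S' else 0 := by
      rw [Finset.sum_mul]
      refine Finset.sum_congr rfl fun S' hS' => ?_
      obtain ⟨hS'N, hS'card⟩ := Finset.mem_powersetCard.mp hS'
      rw [← Finset.sum_filter, Finset.sum_const, card_supersets N S' hS'N a (hS'card ▸ hba),
        hS'card, nsmul_eq_mul, mul_comm]
    have R : (∑ S ∈ N.powersetCard a, f S) * (a.choose b : ℝ)
        = ∑ S' ∈ N.powersetCard b, ∑ S ∈ N.powersetCard a, if S' ⊆ S then f S else 0 := by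
      rw [Finset.sum_comm, Finset.sum_mul]
      refine Finset.sum_congr rfl fun S hS => ?_
      obtain ⟨hSN, hScard⟩ := Finset.mem_powersetCard.mp hS
      have hfe : (N.powersetCard b).filter (fun S' => S' ⊆ S) = S.powersetCard b := by
        ext S'
        simp only [Finset.mem_filter, Finset.mem_powersetCard]
        exact ⟨fun ⟨⟨_, h2⟩, h3⟩ => ⟨h3, h2⟩, fun ⟨h1, h2⟩ => ⟨⟨h1.trans hSN, h2⟩, h1⟩⟩
      rw [← Finset.sum_filter, hfe, Finset.sum_const, Finset.card_powersetCard, hScard,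
        nsmul_eq_mul, mul_comm]
    rw [L, R]
    refine Finset.sum_le_sum fun S' hS' => Finset.sum_le_sum fun S hS => ?_
    by_cases hsub : S' ⊆ S
    · simpa [hsub] using hmon S hS S' hS' hsub
    · simp [hsub]
  have hab : (0:ℝ) < (a.choose b : ℝ) := by exact_mod_cast Nat.choose_pos hba
  rw [← mul_le_mul_iff_of_pos_right hab]
  have hid : (N.card.choose a : ℝ) * (a.choose b : ℝ)
      = (N.card.choose b : ℝ) * ((N.card - b).choose (a - b) : ℝ) := by
    exact_mod_cast congrArg (Nat.cast (R := ℝ)) (Nat.choose_mul (n := N.card) hba)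
  calc (∑ S' ∈ N.powersetCard b, f S') * (N.card.choose a : ℝ) * (a.choose b : ℝ)
      = (∑ S' ∈ N.powersetCard b, f S') * ((N.card - b).choose (a - b) : ℝ)
          * (N.card.choose b : ℝ) := by rw [mul_assoc, hid]; ring
    _ ≤ (∑ S ∈ N.powersetCard a, f S) * (a.choose b : ℝ) * (N.card.choose b : ℝ) := by
        apply mul_le_mul_of_nonneg_right key (by positivity)
    _ = (∑ S ∈ N.powersetCard a, f S) * (N.card.choose b : ℝ) * (a.choose b : ℝ) := by ring

lemma key_ineq {Ω : Type*} [Fintype Ω] {n : ℕ}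
    (p : Ω → ℝ) (hp : ∀ ω, 0 ≤ p ω)
    (A : Fin n → Fin n → Bool) (hA : ∀ i, A i i = false)
    (Y : (Fin n → Bool) → Ω → ℝ) (D : Ω → Fin n → Bool) (Ci : Ω → Prop)
    (γdeg τa τb : ℕ) (h1 : τa ≤ γdeg) (hba : τb ≤ τa) (db : Bool)
    (q : ℝ) (hq0 : 0 < q) (hq1 : q < 1)
    (i : Fin n) (hideg : degA A i = γdeg)
    (hCpos : 0 < prb p Ci)
    (hiid : ∀ d : Fin n → Bool,
      prb p (fun ω => D ω = d ∧ Ci ω) = (∏ j, (if d j then q else 1 - q)) * prb p Ci)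
    (hunc : ∀ d dvec : Fin n → Bool,
      eiv p (fun ω => Y d ω) (fun ω => D ω = dvec ∧ Ci ω) * prb p Ci =
        eiv p (fun ω => Y d ω) Ci * prb p (fun ω => D ω = dvec ∧ Ci ω))
    (hmono : ∀ d d' : Fin n → Bool,
      (∀ j, j ≠ i ∧ A i j = false → d j = d' j) →
      (∀ j, d' j = true → d j = true) →
      d i = db → d' i = db → nbc A i d = τa → nbc A i d' = τb →
      ∀ ω, Y d' ω ≤ Y d ω) :
    cexp p (fun ω => Y (D ω) ω) (fun ω => (D ω i = db ∧ nbc A i (D ω) = τb) ∧ Ci ω) ≤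
    cexp p (fun ω => Y (D ω) ω) (fun ω => (D ω i = db ∧ nbc A i (D ω) = τa) ∧ Ci ω) := by
  have hq1' : 0 < 1 - q := by linarith
  set N : Finset (Fin n) := Finset.univ.filter (fun j => A i j = true) with hN
  have hNmem : ∀ j, j ∈ N ↔ A i j = true := by intro j; simp [hN]
  have hiN : i ∉ N := by simp [hN, hA i]
  have hNcard : N.card = γdeg := hideg
  set w : Bool → ℝ := fun b => if b then q else 1 - q with hw
  have hwpos : ∀ b, 0 < w b := by intro b; cases b <;> simp [hw, hq0, hq1']
  set π : (Fin n → Bool) → ℝ := fun d => ∏ j, w (d j) with hπ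
  set E : (Fin n → Bool) → ℝ := fun d => eiv p (fun ω => Y d ω) Ci with hE
  have hEmono : ∀ d d', (∀ ω, Y d' ω ≤ Y d ω) → E d' ≤ E d := by
    intro d d' h
    refine Finset.sum_le_sum fun ω _ => ?_
    split_ifs
    · exact mul_le_mul_of_nonneg_left (h ω) (hp ω)
    · exact le_refl 0
  -- treatment-vector events
  have hterm : ∀ d, eiv p (fun ω => Y d ω) (fun ω => D ω = d ∧ Ci ω) = π d * E d := by
    intro d
    have h := hunc d d
    rw [hiid d] at h
    have h2 : eiv p (fun ω => Y d ω) (fun ω => D ω = d ∧ Ci ω) * prb p Ci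
        = (π d * E d) * prb p Ci := by rw [h]; ring
    exact mul_right_cancel₀ (ne_of_gt hCpos) h2
  set Sτ : ℕ → Finset (Fin n → Bool) :=
    fun τ => Finset.univ.filter (fun d => d i = db ∧ nbc A i d = τ) with hSτ
  have hNum : ∀ τ, eiv p (fun ω => Y (D ω) ω)
      (fun ω => (D ω i = db ∧ nbc A i (D ω) = τ) ∧ Ci ω) = ∑ d ∈ Sτ τ, π d * E d := by
    intro τ
    rw [eiv_decomp p D Ci (fun d => d i = db ∧ nbc A i d = τ) Y]
    exact Finset.sum_congr rfl fun d _ => hterm d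
  have hDen : ∀ τ, prb p (fun ω => (D ω i = db ∧ nbc A i (D ω) = τ) ∧ Ci ω)
      = (∑ d ∈ Sτ τ, π d) * prb p Ci := by
    intro τ
    rw [prb_decomp p D Ci (fun d => d i = db ∧ nbc A i d = τ), Finset.sum_mul]
    exact Finset.sum_congr rfl fun d _ => hiid d
  -- reparametrization
  set R : Finset (Fin n → Bool) :=
    Finset.univ.filter (fun r => r i = db ∧ ∀ j ∈ N, r j = false) with hR
  set ov : (Fin n → Bool) → Finset (Fin n) → (Fin n → Bool) :=
    fun r S j => if A i j = true then decide (j ∈ S) else r j with hov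
  have hsupp_ov : ∀ r S, S ⊆ N →
      Finset.univ.filter (fun j => A i j = true ∧ ov r S j = true) = S := by
    intro r S hSN
    ext j
    simp only [Finset.mem_filter, Finset.mem_univ, true_and, hov]
    constructor
    · rintro ⟨hj, hj2⟩
      rw [if_pos hj] at hj2
      simpa using hj2
    · intro hj
      have hAj : A i j = true := (hNmem j).mp (hSN hj)
      refine ⟨hAj, ?_⟩
      rw [if_pos hAj]
      simpa using hj
  have hnbc_ov : ∀ r S, S ⊆ N → nbc A i (ov r S) = S.card := by
    intro r S hSN; rw [nbc, hsupp_ov r S hSN]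
  have hovi : ∀ r ∈ R, ∀ S, ov r S i = db := by
    intro r hr S
    obtain ⟨_, hr1, _⟩ := Finset.mem_filter.mp hr
    simp [hov, hA i, hr1]
  have repar : ∀ (τ : ℕ) (F : (Fin n → Bool) → ℝ),
      ∑ d ∈ Sτ τ, F d = ∑ r ∈ R, ∑ S ∈ N.powersetCard τ, F (ov r S) := by
    intro τ F
    rw [← Finset.sum_product']
    refine Finset.sum_nbij'
      (fun d => (fun j => if A i j = true then false else d j,
                 Finset.univ.filter (fun j => A i j = true ∧ d j = true)))
      (fun x => ov x.1 x.2) ?_ ?_ ?_ ?_ ?_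
    · intro d hd
      obtain ⟨_, hd1, hd2⟩ := Finset.mem_filter.mp hd
      refine Finset.mem_product.mpr ⟨Finset.mem_filter.mpr ⟨Finset.mem_univ _, ?_, ?_⟩, ?_⟩
      · simp [hA i, hd1]
      · intro j hj; simp [(hNmem j).mp hj]
      · refine Finset.mem_powersetCard.mpr ⟨fun j hj => ?_, hd2⟩
        simp only [Finset.mem_filter, Finset.mem_univ, true_and] at hj
        exact (hNmem j).mpr hj.1
    · intro x hx
      obtain ⟨hx1, hx2⟩ := Finset.mem_product.mp hx
      obtain ⟨hSN, hScard⟩ := Finset.mem_powersetCard.mp hx2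
      refine Finset.mem_filter.mpr ⟨Finset.mem_univ _, hovi x.1 hx1 x.2, ?_⟩
      rw [hnbc_ov x.1 x.2 hSN, hScard]
    · intro d hd
      funext j
      by_cases hAj : A i j = true
      · simp only [hov, if_pos hAj]
        cases hdj : d j <;> simp [hAj, hdj]
      · simp [hov, hAj]
    · intro x hx
      obtain ⟨hx1, hx2⟩ := Finset.mem_product.mp hx
      obtain ⟨hSN, _⟩ := Finset.mem_powersetCard.mp hx2
      obtain ⟨_, _, hr2⟩ := Finset.mem_filter.mp hx1
      refine Prod.ext ?_ ?_
      · funext j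
        by_cases hAj : A i j = true
        · simp only [if_pos hAj]
          exact (hr2 j ((hNmem j).mpr hAj)).symm
        · simp [hov, hAj]
      · exact hsupp_ov x.1 x.2 hSN
    · intro d hd
      congr 1
      funext j
      by_cases hAj : A i j = true
      · simp only [hov, if_pos hAj, Finset.mem_filter, Finset.mem_univ, true_and]
        cases hdj : d j <;> simp [hAj, hdj]
      · simp [hov, hAj]
  -- factorization of π on ov
  set ρ : (Fin n → Bool) → ℝ :=
    fun r => ∏ j ∈ Finset.univ.filter (fun j => ¬ A i j = true), w (r j) with hρ
  have hρpos : ∀ r, 0 < ρ r := fun r => Finset.prod_pos fun j _ => hwpos _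
  set c : ℕ → ℝ := fun τ => q ^ τ * (1 - q) ^ (γdeg - τ) with hc
  have hcpos : ∀ τ, 0 < c τ := fun τ => by positivity
  have hπov : ∀ (τ : ℕ) (r : Fin n → Bool), ∀ S ∈ N.powersetCard τ,
      π (ov r S) = c τ * ρ r := by
    intro τ r S hS
    obtain ⟨hSN, hScard⟩ := Finset.mem_powersetCard.mp hS
    show (∏ j, w (ov r S j)) = c τ * ρ r
    rw [← Finset.prod_filter_mul_prod_filter_not Finset.univ (fun j => A i j = true)]
    have h2 : ∏ j ∈ Finset.univ.filter (fun j => ¬ A i j = true), w (ov r S j)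
        = ρ r := by
      refine Finset.prod_congr rfl fun j hj => ?_
      simp only [Finset.mem_filter] at hj
      simp [hov, hj.2]
    have h1 : ∏ j ∈ Finset.univ.filter (fun j => A i j = true), w (ov r S j) = c τ := by
      have : ∀ j ∈ N, w (ov r S j) = if j ∈ S then q else 1 - q := by
        intro j hj
        have hAj := (hNmem j).mp hj
        by_cases hjS : j ∈ S <;> simp [hov, hw, hAj, hjS]
      rw [show Finset.univ.filter (fun j => A i j = true) = N from rfl]
      rw [Finset.prod_congr rfl this]
      rw [← Finset.sdiff_union_of_subset hSN, Finset.prod_union Finset.sdiff_disjoint]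
      rw [Finset.prod_congr rfl (fun j hj => if_neg (Finset.mem_sdiff.mp hj).2),
        Finset.prod_congr (rfl : S = S) (fun j hj => if_pos hj)]
      rw [Finset.prod_const, Finset.prod_const, Finset.card_sdiff_of_subset hSN, hNcard, hScard, hc]
      ring
    rw [h1, h2]
  set G : ℕ → (Fin n → Bool) → ℝ := fun τ r => ∑ S ∈ N.powersetCard τ, E (ov r S) with hG
  have hNum2 : ∀ τ, ∑ d ∈ Sτ τ, π d * E d = c τ * ∑ r ∈ R, ρ r * G τ r := by
    intro τ
    rw [repar τ (fun d => π d * E d), Finset.mul_sum]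
    refine Finset.sum_congr rfl fun r _ => ?_
    rw [hG, Finset.mul_sum, Finset.mul_sum]
    refine Finset.sum_congr rfl fun S hS => ?_
    rw [hπov τ r S hS]; ring
  have hW : ∀ τ, ∑ d ∈ Sτ τ, π d = c τ * (∑ r ∈ R, ρ r) * (γdeg.choose τ : ℝ) := by
    intro τ
    rw [repar τ π, Finset.mul_sum, Finset.sum_mul]
    refine Finset.sum_congr rfl fun r _ => ?_
    rw [Finset.sum_congr rfl (fun S hS => hπov τ r S hS), Finset.sum_const,
      Finset.card_powersetCard, hNcard, nsmul_eq_mul]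
    ring
  -- positivity
  have hRne : R.Nonempty := by
    refine ⟨fun j => if j = i then db else false, Finset.mem_filter.mpr ⟨Finset.mem_univ _, ?_, ?_⟩⟩
    · simp
    · intro j hj
      have : j ≠ i := by
        intro h; rw [h] at hj; exact hiN hj
      simp [this]
  have hsumρ : 0 < ∑ r ∈ R, ρ r := Finset.sum_pos (fun r _ => hρpos r) hRne
  have hchoosea : (0:ℝ) < (γdeg.choose τa : ℝ) := by
    exact_mod_cast Nat.choose_pos h1
  have hchooseb : (0:ℝ) < (γdeg.choose τb : ℝ) := by
    exact_mod_cast Nat.choose_pos (hba.trans h1)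
  have hDenpos : ∀ τ, τ ≤ γdeg →
      0 < (∑ d ∈ Sτ τ, π d) * prb p Ci := by
    intro τ hτ
    rw [hW τ]
    have : (0:ℝ) < (γdeg.choose τ : ℝ) := by exact_mod_cast Nat.choose_pos hτ
    positivity
  -- the main comparison
  have key2 : (∑ r ∈ R, ρ r * G τb r) * (γdeg.choose τa : ℝ)
      ≤ (∑ r ∈ R, ρ r * G τa r) * (γdeg.choose τb : ℝ) := by
    rw [Finset.sum_mul, Finset.sum_mul]
    refine Finset.sum_le_sum fun r hr => ?_
    have hcomb := comb_avg N τa τb hba (hNcard ▸ h1) (fun S => E (ov r S)) ?_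
    · rw [hNcard] at hcomb
      calc ρ r * G τb r * (γdeg.choose τa : ℝ)
          = ρ r * (G τb r * (γdeg.choose τa : ℝ)) := by ring
        _ ≤ ρ r * (G τa r * (γdeg.choose τb : ℝ)) :=
            mul_le_mul_of_nonneg_left hcomb (le_of_lt (hρpos r))
        _ = ρ r * G τa r * (γdeg.choose τb : ℝ) := by ring
    · intro S hS S' hS' hsub
      obtain ⟨hSN, hScard⟩ := Finset.mem_powersetCard.mp hS
      obtain ⟨hS'N, hS'card⟩ := Finset.mem_powersetCard.mp hS'
      refine hEmono _ _ (hmono (ov r S) (ov r S') ?_ ?_ (hovi r hr S) (hovi r hr S') ?_ ?_)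
      · intro j ⟨_, hAj⟩
        simp [hov, hAj]
      · intro j hj
        by_cases hAj : A i j = true
        · simp only [hov, if_pos hAj] at hj ⊢
          have : j ∈ S' := by simpa using hj
          simpa using hsub this
        · simpa [hov, hAj] using hj
      · rw [hnbc_ov r S hSN, hScard]
      · rw [hnbc_ov r S' hS'N, hS'card]
  -- conclude
  rw [cexp, cexp, hNum τa, hNum τb, hDen τa, hDen τb]
  rw [div_le_div_iff₀ (hDenpos τb (hba.trans h1)) (hDenpos τa h1)]
  rw [hNum2 τa, hNum2 τb, hW τa, hW τb]
  calc c τb * (∑ r ∈ R, ρ r * G τb r) * (c τa * (∑ r ∈ R, ρ r) * (γdeg.choose τa : ℝ) * prb p Ci)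
      = (c τa * c τb * (∑ r ∈ R, ρ r) * prb p Ci)
          * ((∑ r ∈ R, ρ r * G τb r) * (γdeg.choose τa : ℝ)) := by ring
    _ ≤ (c τa * c τb * (∑ r ∈ R, ρ r) * prb p Ci)
          * ((∑ r ∈ R, ρ r * G τa r) * (γdeg.choose τb : ℝ)) := by
        apply mul_le_mul_of_nonneg_left key2
        have := hcpos τa; have := hcpos τb
        positivity
    _ = c τa * (∑ r ∈ R, ρ r * G τa r) * (c τb * (∑ r ∈ R, ρ r) * (γdeg.choose τb : ℝ) * prb p Ci) := by
        ring


/-- Theorem 3: for the treated-neighbor-count estimand with exposure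
`Tᵢ = (Dᵢ, Σⱼ Aᵢⱼ Dⱼ)`, subpopulation of units with degree `γdeg`, exposure values
`t = (db, τa)` and `t' = (db, τb)` with `γdeg ≥ τa > τb > 0`, if the treatments are i.i.d.
Bernoulli(q) conditional on `𝒞ᵢ` for every `i`, `q ∈ (0,1)`, and unconfoundedness holds,
then `τ(t,t')` satisfies ordered K-neighborhood sign preservation. -/
theorem stmt14 {Ω : Type*} [Fintype Ω] {n : ℕ}
    (p : Ω → ℝ) (hp : ∀ ω, 0 ≤ p ω) (hp1 : ∑ ω, p ω = 1)
    (A : Fin n → Fin n → Bool) (hA : ∀ i, A i i = false)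
    (Y : Fin n → (Fin n → Bool) → Ω → ℝ) (D : Ω → Fin n → Bool)
    (C : Fin n → Ω → Prop)
    (γdeg τa τb : ℕ) (h1 : τa ≤ γdeg) (h2 : τb < τa) (h3 : 0 < τb) (db : Bool)
    (q : ℝ) (hq0 : 0 < q) (hq1 : q < 1)
    -- treatments are i.i.d. Bernoulli(q) conditional on 𝒞ᵢ, for every i
    (hC : ∀ i, 0 < prb p (C i))
    (hiid : ∀ (i : Fin n) (d : Fin n → Bool),
      cpr p (fun ω => D ω = d) (C i) = ∏ j, (if d j then q else 1 - q))
    -- unconfoundedness: Yᵢ(·) ⊥ D | 𝒞ᵢ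
    (hunc : ∀ (i : Fin n) (d dvec : Fin n → Bool),
      eiv p (fun ω => Y i d ω) (fun ω => D ω = dvec ∧ C i ω) * prb p (C i) =
        eiv p (fun ω => Y i d ω) (C i) * prb p (fun ω => D ω = dvec ∧ C i ω)) :
    -- ordered K-neighborhood sign preservation for
    -- τ(t,t') = (1/mₙ) Σ_{i : deg i = γdeg} (E[Yᵢ | Tᵢ=(db,τa), 𝒞ᵢ] − E[Yᵢ | Tᵢ=(db,τb), 𝒞ᵢ])
    ((∀ i ∈ Finset.univ.filter (fun i : Fin n => degA A i = γdeg),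
        ∀ d d' : Fin n → Bool,
        (∀ j, j ≠ i ∧ A i j = false → d j = d' j) →   -- agree outside N(i,1)
        (∀ j, d' j = true → d j = true) →              -- d ≥ d' componentwise
        d i = db → d' i = db → nbc A i d = τa → nbc A i d' = τb →
        ∀ ω, Y i d' ω ≤ Y i d ω) →
      0 ≤ ((Finset.univ.filter (fun i : Fin n => degA A i = γdeg)).card : ℝ)⁻¹ *
        ∑ i ∈ Finset.univ.filter (fun i : Fin n => degA A i = γdeg),
          (cexp p (fun ω => Y i (D ω) ω)
              (fun ω => (D ω i = db ∧ nbc A i (D ω) = τa) ∧ C i ω) -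
           cexp p (fun ω => Y i (D ω) ω)
              (fun ω => (D ω i = db ∧ nbc A i (D ω) = τb) ∧ C i ω))) ∧
    ((∀ i ∈ Finset.univ.filter (fun i : Fin n => degA A i = γdeg),
        ∀ d d' : Fin n → Bool,
        (∀ j, j ≠ i ∧ A i j = false → d j = d' j) →
        (∀ j, d' j = true → d j = true) →
        d i = db → d' i = db → nbc A i d = τa → nbc A i d' = τb →
        ∀ ω, Y i d ω ≤ Y i d' ω) →
      ((Finset.univ.filter (fun i : Fin n => degA A i = γdeg)).card : ℝ)⁻¹ *
        ∑ i ∈ Finset.univ.filter (fun i : Fin n => degA A i = γdeg),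
          (cexp p (fun ω => Y i (D ω) ω)
              (fun ω => (D ω i = db ∧ nbc A i (D ω) = τa) ∧ C i ω) -
           cexp p (fun ω => Y i (D ω) ω)
              (fun ω => (D ω i = db ∧ nbc A i (D ω) = τb) ∧ C i ω)) ≤ 0) := by
  have hiid' : ∀ (i : Fin n) (d : Fin n → Bool),
      prb p (fun ω => D ω = d ∧ C i ω) = (∏ j, (if d j then q else 1 - q)) * prb p (C i) := by
    intro i d
    have h0 := hiid i d
    rw [cpr, div_eq_iff (ne_of_gt (hC i))] at h0
    exact h0
  constructor
  · intro h
    apply mul_nonneg (inv_nonneg.mpr (Nat.cast_nonneg _))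
    apply Finset.sum_nonneg
    intro i hi
    have hdeg : degA A i = γdeg := (Finset.mem_filter.mp hi).2
    apply sub_nonneg.mpr
    exact key_ineq p hp A hA (Y i) D (C i) γdeg τa τb h1 (le_of_lt h2) db q hq0 hq1 i hdeg
      (hC i) (hiid' i) (hunc i) (h i hi)
  · intro h
    have hsum : (∑ i ∈ Finset.univ.filter (fun i : Fin n => degA A i = γdeg),
        (cexp p (fun ω => Y i (D ω) ω)
            (fun ω => (D ω i = db ∧ nbc A i (D ω) = τa) ∧ C i ω) -
         cexp p (fun ω => Y i (D ω) ω)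
            (fun ω => (D ω i = db ∧ nbc A i (D ω) = τb) ∧ C i ω))) ≤ 0 := by
      apply Finset.sum_nonpos
      intro i hi
      have hdeg : degA A i = γdeg := (Finset.mem_filter.mp hi).2
      apply sub_nonpos.mpr
      have hunc'' : ∀ d dvec : Fin n → Bool,
          eiv p (fun ω => -(Y i d ω)) (fun ω => D ω = dvec ∧ C i ω) * prb p (C i) =
            eiv p (fun ω => -(Y i d ω)) (C i) * prb p (fun ω => D ω = dvec ∧ C i ω) := by
        intro d dvec
        rw [eiv_neg p (fun ω => Y i d ω) (fun ω => D ω = dvec ∧ C i ω),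
          eiv_neg p (fun ω => Y i d ω) (C i), neg_mul, neg_mul, hunc i d dvec]
      have hmono'' : ∀ d d' : Fin n → Bool,
          (∀ j, j ≠ i ∧ A i j = false → d j = d' j) →
          (∀ j, d' j = true → d j = true) →
          d i = db → d' i = db → nbc A i d = τa → nbc A i d' = τb →
          ∀ ω, -(Y i d' ω) ≤ -(Y i d ω) := by
        intro d d' ha hb hc hd he hf ω
        have := h i hi d d' ha hb hc hd he hf ω
        linarith
      have hk := key_ineq p hp A hA (fun d ω => -(Y i d ω)) D (C i) γdeg τa τb h1
        (le_of_lt h2) db q hq0 hq1 i hdeg (hC i) (hiid' i) hunc'' hmono''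
      rw [cexp_neg p (fun ω => Y i (D ω) ω)
          (fun ω => (D ω i = db ∧ nbc A i (D ω) = τb) ∧ C i ω),
        cexp_neg p (fun ω => Y i (D ω) ω)
          (fun ω => (D ω i = db ∧ nbc A i (D ω) = τa) ∧ C i ω)] at hk
      linarith
    have hinv : (0:ℝ) ≤ ((Finset.univ.filter (fun i : Fin n => degA A i = γdeg)).card : ℝ)⁻¹ :=
      inv_nonneg.mpr (Nat.cast_nonneg _)
    exact mul_nonpos_iff.mpr (Or.inl ⟨hinv, hsum⟩)
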